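/- arXiv:2411.08086 — 2 statements merged into one kernel-verified Lean document; each statement's English description precedes it below -/
import Mathlib

section
/- Let H be a Hilbert space and let (a_i)_{i∈F} and (b_i)_{i∈F} be finite families of bounded operators on H. Then for all vectors ξ, ξ', η, η' in H, |⟨(Σ_{i∈F} a_i* ⊗ b_i)(ξ⊗η), ξ'⊗η'⟩| ≤ ‖ξ‖ ‖η'‖ · ⟨(Σ_{i∈F} a_i* a_i) ξ', ξ'⟩^{1/2} · ⟨(Σ_{i∈F} b_i* b_i) η, η⟩^{1/2}. -/
/-- Cauchy–Schwarz estimate for the pairing of a finite sum of elementary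
tensor operators `∑ aᵢ* ⊗ bᵢ` against elementary tensors, expressed via the identity
`⟨(∑ aᵢ*⊗bᵢ)(ξ⊗η), ξ'⊗η'⟩ = ∑ ⟨aᵢ*ξ,ξ'⟩⟨bᵢη,η'⟩`. -/
theorem stmt0 {H : Type*} [NormedAddCommGroup H] [InnerProductSpace ℂ H] [CompleteSpace H]
    {ι : Type*} (F : Finset ι) (a b : ι → H →L[ℂ] H) (ξ ξ' η η' : H) :
    ‖∑ i ∈ F,
        (inner ℂ ξ' ((ContinuousLinearMap.adjoint (a i)) ξ) : ℂ) * (inner ℂ η' ((b i) η) : ℂ)‖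
      ≤ ‖ξ‖ * ‖η'‖ *
        Real.sqrt ((inner ℂ ξ' ((∑ i ∈ F, (ContinuousLinearMap.adjoint (a i)).comp (a i)) ξ') : ℂ).re) *
        Real.sqrt (((inner ℂ η ((∑ i ∈ F, (ContinuousLinearMap.adjoint (b i)).comp (b i)) η) : ℂ)).re) := by
  have hA : (inner ℂ ξ' ((∑ i ∈ F, (ContinuousLinearMap.adjoint (a i)).comp (a i)) ξ') : ℂ).re
      = ∑ i ∈ F, ‖a i ξ'‖ ^ 2 := by
    rw [ContinuousLinearMap.sum_apply, inner_sum, Complex.re_sum]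
    refine Finset.sum_congr rfl fun i _ => ?_
    rw [ContinuousLinearMap.comp_apply, ContinuousLinearMap.adjoint_inner_right]
    simpa using inner_self_eq_norm_sq (𝕜 := ℂ) (a i ξ')
  have hB : (inner ℂ η ((∑ i ∈ F, (ContinuousLinearMap.adjoint (b i)).comp (b i)) η) : ℂ).re
      = ∑ i ∈ F, ‖b i η‖ ^ 2 := by
    rw [ContinuousLinearMap.sum_apply, inner_sum, Complex.re_sum]
    refine Finset.sum_congr rfl fun i _ => ?_
    rw [ContinuousLinearMap.comp_apply, ContinuousLinearMap.adjoint_inner_right]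
    simpa using inner_self_eq_norm_sq (𝕜 := ℂ) (b i η)
  rw [hA, hB]
  calc ‖∑ i ∈ F,
        (inner ℂ ξ' ((ContinuousLinearMap.adjoint (a i)) ξ) : ℂ) * (inner ℂ η' ((b i) η) : ℂ)‖
      ≤ ∑ i ∈ F, ‖(inner ℂ ξ' ((ContinuousLinearMap.adjoint (a i)) ξ) : ℂ)‖
          * ‖(inner ℂ η' ((b i) η) : ℂ)‖ := by
        simpa [norm_mul] using
          norm_sum_le F (fun i =>
            (inner ℂ ξ' ((ContinuousLinearMap.adjoint (a i)) ξ) : ℂ) * (inner ℂ η' ((b i) η) : ℂ))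
    _ ≤ Real.sqrt (∑ i ∈ F, ‖(inner ℂ ξ' ((ContinuousLinearMap.adjoint (a i)) ξ) : ℂ)‖ ^ 2)
          * Real.sqrt (∑ i ∈ F, ‖(inner ℂ η' ((b i) η) : ℂ)‖ ^ 2) :=
        Real.sum_mul_le_sqrt_mul_sqrt F _ _
    _ ≤ Real.sqrt (∑ i ∈ F, (‖ξ‖ * ‖a i ξ'‖) ^ 2)
          * Real.sqrt (∑ i ∈ F, (‖η'‖ * ‖b i η‖) ^ 2) := by
        gcongr with i hi i hi
        · rw [ContinuousLinearMap.adjoint_inner_right]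
          simpa [mul_comm] using norm_inner_le_norm (𝕜 := ℂ) (a i ξ') ξ
        · simpa [mul_comm] using norm_inner_le_norm (𝕜 := ℂ) η' (b i η)
    _ = ‖ξ‖ * ‖η'‖ * Real.sqrt (∑ i ∈ F, ‖a i ξ'‖ ^ 2) * Real.sqrt (∑ i ∈ F, ‖b i η‖ ^ 2) := by
        simp_rw [mul_pow, ← Finset.mul_sum]
        rw [Real.sqrt_mul (by positivity), Real.sqrt_mul (by positivity),
          Real.sqrt_sq (norm_nonneg _), Real.sqrt_sq (norm_nonneg _)]
        ring
end

section
/- Let D ∈ M_n(ℂ) ⊗ M_m(ℂ), let N ⊆ M_m(ℂ) be a unital *-subalgebra, and write D = Σ_{i,j} ε_{i,j} ⊗ d_{i,j} with d_{i,j} ∈ M_m(ℂ). Then the following are equivalent: (a) d_{i,j}* d_{k,l} ∈ N for all i,j,k,l; (b) D*(x ⊗ I_m) D ∈ M_n(ℂ) ⊗ N for every x ∈ M_n(ℂ). -/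
open Matrix
open scoped Kronecker

/-- For `D ∈ Mₙ(ℂ) ⊗ Mₘ(ℂ)` with blocks `d_{i,j}` and a unital *-subalgebra
`N ⊆ Mₘ(ℂ)`: all `d_{i,j}* d_{k,l}` lie in `N` iff `D*(x ⊗ Iₘ)D ∈ Mₙ(ℂ) ⊗ N` for every `x`
(membership in `Mₙ(ℂ) ⊗ N` meaning all blocks lie in `N`). -/
theorem stmt3 {n m : ℕ} (N : StarSubalgebra ℂ (Matrix (Fin m) (Fin m) ℂ))
    (D : Matrix (Fin n × Fin m) (Fin n × Fin m) ℂ) :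
    (∀ i j k l : Fin n,
        (Matrix.of fun p q => D (i, p) (j, q))ᴴ * (Matrix.of fun p q => D (k, p) (l, q)) ∈ N)
      ↔ (∀ x : Matrix (Fin n) (Fin n) ℂ, ∀ p q : Fin n,
          (Matrix.of fun r s =>
            (Dᴴ * (x ⊗ₖ (1 : Matrix (Fin m) (Fin m) ℂ)) * D) (p, r) (q, s)) ∈ N) := by
  have key : ∀ (x : Matrix (Fin n) (Fin n) ℂ) (p q : Fin n),
      (Matrix.of fun r s =>
          (Dᴴ * (x ⊗ₖ (1 : Matrix (Fin m) (Fin m) ℂ)) * D) (p, r) (q, s)) =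
        ∑ i, ∑ j, x i j •
          ((Matrix.of fun a b => D (i, a) (p, b))ᴴ * (Matrix.of fun a b => D (j, a) (q, b))) := by
    intro x p q
    ext r s
    simp only [Matrix.mul_apply, Matrix.sum_apply, Matrix.smul_apply, Matrix.of_apply,
      conjTranspose_apply, kroneckerMap_apply, Matrix.one_apply, Fintype.sum_prod_type,
      mul_ite, mul_one, mul_zero, ite_mul, zero_mul, Finset.sum_ite_eq, Finset.mul_sum,
      Finset.sum_ite_eq', Finset.mem_univ, if_true, smul_eq_mul]
    simp only [Finset.sum_mul, Finset.mul_sum]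
    refine Eq.trans (Finset.sum_congr rfl fun j _ => Finset.sum_comm) ?_
    rw [Finset.sum_comm]
    refine Finset.sum_congr rfl fun i _ => Finset.sum_congr rfl fun j _ =>
      Finset.sum_congr rfl fun a _ => ?_
    ring
  constructor
  · intro h x p q
    rw [key]
    exact sum_mem fun i _ => sum_mem fun j _ =>
      SMulMemClass.smul_mem _ (h i p j q)
  · intro h i j k l
    have := h (Matrix.single i k 1) j l
    rw [key] at this
    simpa [Matrix.single_apply, ite_smul, ite_and, Finset.sum_ite_eq] using this
end
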